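/- Zagier's strange identity in two variables: \sum_{n=0}^{\infty} \chi_{12}(n) \, q^{(n^2-1)/24} \, x^{(n-1)/2} = \sum_{n=0}^{\infty} (x;q)_{n+1} \, x^n, as an identity of formal power series in q and x (with q replaced by q^2 throughout to make exponents integral if desired). -/

import Mathlib

noncomputable section

/-- The product (coefficientwise) topology on formal power series. -/
instance powerSeriesTopology {R : Type*} [Semiring R] [TopologicalSpace R] :
    TopologicalSpace (PowerSeries R) :=
  TopologicalSpace.induced (fun f (n : ℕ) => (PowerSeries.coeff (R := R) n) f) Pi.topologicalSpace

/-- The $q$-Pochhammer symbol $(a;q)_n = \prod_{j=1}^{n}(1 - a q^{j-1})$. -/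
def qPoch {R : Type*} [CommRing R] (a q : R) (n : ℕ) : R :=
  ∏ k ∈ Finset.range n, (1 - a * q ^ k)

/-- Formal power series in `x` (outer variable) over formal power series in `q`
(inner variable); i.e. formal power series in `q` and `x`. -/
abbrev Rqx : Type := PowerSeries (PowerSeries ℚ)

/-- The variable `x`. -/
def Xx : Rqx := PowerSeries.X

/-- The variable `q`, viewed as a constant (in `x`) power series. -/
def Qc : Rqx := PowerSeries.C PowerSeries.X

/-- The period-12 function `χ₁₂`: value 1 at `n ≡ ±1`, `-1` at `n ≡ ±5 (mod 12)`. -/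
def chi12 (n : ℕ) : ℤ :=
  if n % 12 = 1 ∨ n % 12 = 11 then 1 else if n % 12 = 5 ∨ n % 12 = 7 then -1 else 0

namespace ZagierAux

open PowerSeries Finset

instance ps_t2 {S : Type*} [Semiring S] [TopologicalSpace S] [T2Space S] :
    T2Space (PowerSeries S) := by
  have hemb : Topology.IsEmbedding (fun f (n : ℕ) => (PowerSeries.coeff (R := S) n) f) := by
    refine ⟨Topology.IsInducing.induced _, ?_⟩
    intro f g hfg
    exact PowerSeries.ext fun n => congrFun hfg n
  exact hemb.t2Space

abbrev R : Type := PowerSeries ℚ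

/-- `q` as power series over ℚ. -/
def qq : R := PowerSeries.X

/-- `A n j` = coefficient of `x^j` in `∏_{k<n} (1 - x q^k)`. -/
def A : ℕ → ℕ → R
  | 0, 0 => 1
  | 0, _ + 1 => 0
  | n + 1, 0 => A n 0
  | n + 1, j + 1 => A n (j + 1) - qq ^ n * A n j

@[simp] lemma A_zero_zero : A 0 0 = 1 := rfl
@[simp] lemma A_zero_succ (j : ℕ) : A 0 (j + 1) = 0 := rfl
@[simp] lemma A_succ_zero (n : ℕ) : A (n + 1) 0 = A n 0 := rfl
lemma A_succ_succ (n j : ℕ) : A (n + 1) (j + 1) = A n (j + 1) - qq ^ n * A n j := rfl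

@[simp] lemma A_n_zero (n : ℕ) : A n 0 = 1 := by
  induction n with
  | zero => rfl
  | succ n ih => rw [A_succ_zero, ih]

lemma A_eq_zero : ∀ n j, n < j → A n j = 0 := by
  intro n
  induction n with
  | zero => intro j hj; cases j with
    | zero => omega
    | succ j => simp
  | succ n ih =>
    intro j hj
    cases j with
    | zero => omega
    | succ j =>
      rw [A_succ_succ, ih (j+1) (by omega), ih j (by omega), mul_zero, sub_zero]

/-- prepend-version recurrence. -/
lemma A_rec2 : ∀ n j, A (n + 1) (j + 1) = qq ^ (j + 1) * A n (j + 1) - qq ^ j * A n j := by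
  intro n
  induction n with
  | zero =>
    intro j
    cases j with
    | zero => simp [A_succ_succ]
    | succ j => simp [A_succ_succ]
  | succ n ih =>
    intro j
    cases j with
    | zero =>
      conv_lhs => rw [A_succ_succ, ih 0]
      conv_rhs => rw [A_succ_succ]
      simp only [A_n_zero, A_succ_zero]
      ring
    | succ j =>
      conv_lhs => rw [A_succ_succ, ih (j+1), ih j]
      conv_rhs => rw [A_succ_succ n (j+1), A_succ_succ n j]
      ring

lemma peel_first (f : ℕ → R) (n : ℕ) :
    ∑ k ∈ Finset.range (n + 1), f k = f 0 + ∑ k ∈ Finset.range n, f (k + 1) := by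
  rw [Finset.sum_range_succ']
  ring

/-- `Csum m` = coefficient of `x^m` in `∑_n (x;q)_{n+1} x^n`. -/
def Csum (m : ℕ) : R := ∑ j ∈ Finset.range (m + 1), A (m + 1 - j) j

def Dsum (m : ℕ) : R := ∑ j ∈ Finset.range (m + 1), qq ^ j * A (m + 1 - j) j

lemma sum_first (m : ℕ) :
    ∑ i ∈ Finset.range (m + 2), qq ^ (i + 1) * A (m + 1 - i) (i + 1) = Dsum (m + 1) - 1 := by
  have h1 : Dsum (m + 1)
      = qq ^ 0 * A (m + 1 + 1 - 0) 0
        + ∑ i ∈ Finset.range (m + 1), qq ^ (i + 1) * A (m + 1 + 1 - (i + 1)) (i + 1) := by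
    unfold Dsum
    exact peel_first _ _
  have h2 : ∑ i ∈ Finset.range (m + 2), qq ^ (i + 1) * A (m + 1 - i) (i + 1)
      = (∑ i ∈ Finset.range (m + 1), qq ^ (i + 1) * A (m + 1 - i) (i + 1))
        + qq ^ (m + 1 + 1) * A (m + 1 - (m + 1)) (m + 2) := by
    rw [Finset.sum_range_succ]
  have h3 : ∀ i ∈ Finset.range (m + 1), qq ^ (i + 1) * A (m + 1 + 1 - (i + 1)) (i + 1)
      = qq ^ (i + 1) * A (m + 1 - i) (i + 1) := by
    intro i hi
    have : m + 1 + 1 - (i + 1) = m + 1 - i := by omega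
    rw [this]
  rw [Finset.sum_congr rfl h3] at h1
  have h4 : A (m + 1 - (m + 1)) (m + 2) = 0 := by
    rw [Nat.sub_self]
    exact A_eq_zero 0 (m + 2) (by omega)
  rw [h4, mul_zero, add_zero] at h2
  rw [h2]
  simp only [pow_zero, one_mul, A_n_zero] at h1
  linear_combination -h1

lemma Csum_rec (m : ℕ) : Csum (m + 2) = Dsum (m + 1) - Dsum m := by
  have h0 : Csum (m + 2)
      = A (m + 2 + 1 - 0) 0 + ∑ i ∈ Finset.range (m + 2), A (m + 2 + 1 - (i + 1)) (i + 1) := by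
    unfold Csum
    exact peel_first _ _
  have h3 : ∀ i ∈ Finset.range (m + 2), A (m + 2 + 1 - (i + 1)) (i + 1)
      = qq ^ (i + 1) * A (m + 1 - i) (i + 1) - qq ^ i * A (m + 1 - i) i := by
    intro i hi
    simp only [Finset.mem_range] at hi
    have he : m + 2 + 1 - (i + 1) = (m + 1 - i) + 1 := by omega
    rw [he, A_rec2]
  rw [Finset.sum_congr rfl h3, Finset.sum_sub_distrib] at h0
  have h5 : ∑ i ∈ Finset.range (m + 2), qq ^ i * A (m + 1 - i) i
      = Dsum m + qq ^ (m + 1) * A (m + 1 - (m + 1)) (m + 1) := by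
    unfold Dsum
    rw [Finset.sum_range_succ]
  have h6 : A (m + 1 - (m + 1)) (m + 1) = 0 := by
    rw [Nat.sub_self]
    exact A_eq_zero 0 (m + 1) (by omega)
  rw [h6, mul_zero, add_zero] at h5
  rw [sum_first, h5, A_n_zero] at h0
  linear_combination h0

lemma Dsum_rec (m : ℕ) : Dsum (m + 2) = Dsum (m + 1) - qq ^ (m + 2) * Csum m := by
  have h0 : Dsum (m + 2)
      = qq ^ 0 * A (m + 2 + 1 - 0) 0
        + ∑ i ∈ Finset.range (m + 2), qq ^ (i + 1) * A (m + 2 + 1 - (i + 1)) (i + 1) := by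
    unfold Dsum
    exact peel_first _ _
  have h3 : ∀ i ∈ Finset.range (m + 2), qq ^ (i + 1) * A (m + 2 + 1 - (i + 1)) (i + 1)
      = qq ^ (i + 1) * A (m + 1 - i) (i + 1) - qq ^ (m + 2) * A (m + 1 - i) i := by
    intro i hi
    simp only [Finset.mem_range] at hi
    have he : m + 2 + 1 - (i + 1) = (m + 1 - i) + 1 := by omega
    rw [he, A_succ_succ]
    have he2 : qq ^ (i + 1) * qq ^ (m + 1 - i) = qq ^ (m + 2) := by
      rw [← pow_add]
      congr 1
      omega
    rw [mul_sub, ← mul_assoc, he2]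
  rw [Finset.sum_congr rfl h3, Finset.sum_sub_distrib, ← Finset.mul_sum] at h0
  have h5 : ∑ i ∈ Finset.range (m + 2), A (m + 1 - i) i
      = Csum m + A (m + 1 - (m + 1)) (m + 1) := by
    unfold Csum
    rw [Finset.sum_range_succ]
  have h6 : A (m + 1 - (m + 1)) (m + 1) = 0 := by
    rw [Nat.sub_self]
    exact A_eq_zero 0 (m + 1) (by omega)
  rw [h6, add_zero] at h5
  rw [sum_first, h5, A_n_zero] at h0
  linear_combination h0

/-- The conjectured closed form of `Csum m`. -/
def c (m : ℕ) : R := PowerSeries.C (R := ℚ) ((chi12 (2 * m + 1) : ℤ) : ℚ) * qq ^ (m * (m + 1) / 6)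

def d (m : ℕ) : R := ∑ k ∈ Finset.range (m + 2), c k

lemma chi_step (m : ℕ) : chi12 (2 * m + 7) = - chi12 (2 * m + 1) := by
  unfold chi12
  have h : ((2*m+1) % 12 = 1 ∧ (2*m+7) % 12 = 7) ∨ ((2*m+1) % 12 = 3 ∧ (2*m+7) % 12 = 9)
      ∨ ((2*m+1) % 12 = 5 ∧ (2*m+7) % 12 = 11) ∨ ((2*m+1) % 12 = 7 ∧ (2*m+7) % 12 = 1)
      ∨ ((2*m+1) % 12 = 9 ∧ (2*m+7) % 12 = 3) ∨ ((2*m+1) % 12 = 11 ∧ (2*m+7) % 12 = 5) := by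
    omega
  rcases h with ⟨h1, h2⟩ | ⟨h1, h2⟩ | ⟨h1, h2⟩ | ⟨h1, h2⟩ | ⟨h1, h2⟩ | ⟨h1, h2⟩ <;>
    rw [h1, h2] <;> norm_num

lemma c_step (m : ℕ) : c (m + 3) = - (qq ^ (m + 2) * c m) := by
  unfold c
  have he : (m + 3) * (m + 3 + 1) / 6 = m * (m + 1) / 6 + (m + 2) := by
    have h1 : (m + 3) * (m + 3 + 1) = m * (m + 1) + 6 * (m + 2) := by ring
    rw [h1, Nat.add_mul_div_left _ _ (by norm_num : (0:ℕ) < 6)]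
  have hchi : chi12 (2 * (m + 3) + 1) = - chi12 (2 * m + 1) := by
    have : 2 * (m + 3) + 1 = 2 * m + 7 := by ring
    rw [this, chi_step]
  rw [hchi, he, pow_add]
  simp only [Int.cast_neg, map_neg]
  ring

lemma d_step (m : ℕ) : d (m + 1) = d m + c (m + 2) := by
  unfold d
  rw [Finset.sum_range_succ]

lemma main (m : ℕ) : Csum m = c m ∧ Dsum m = d m := by
  induction m using Nat.strong_induction_on with
  | _ m ih =>
    match m with
    | 0 =>
      constructor
      · show Csum 0 = c 0
        unfold Csum c chi12
        norm_num
      · show Dsum 0 = d 0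
        unfold Dsum d c chi12
        norm_num [Finset.sum_range_succ]
    | 1 =>
      constructor
      · show Csum 1 = c 1
        unfold Csum c chi12
        norm_num [Finset.sum_range_succ, A_succ_succ]
      · show Dsum 1 = d 1
        unfold Dsum d c chi12
        norm_num [Finset.sum_range_succ, A_succ_succ]
    | (m + 2) =>
      have hm := ih m (by omega)
      have hm1 := ih (m + 1) (by omega)
      have hC : Csum (m + 2) = c (m + 2) := by
        rw [Csum_rec, hm1.2, hm.2, d_step]
        ring
      refine ⟨hC, ?_⟩
      have hd2 : d (m + 2) = d (m + 1) + c (m + 3) := d_step (m + 1)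
      rw [Dsum_rec, hm1.2, hm.1, hd2, d_step, c_step]
      ring

/-- Coefficients of the q-Pochhammer products. -/
lemma coeff_qPoch : ∀ n j, (PowerSeries.coeff (R := R) j) (qPoch Xx Qc n) = A n j := by
  intro n
  induction n with
  | zero =>
    intro j
    unfold qPoch
    rw [Finset.range_zero, Finset.prod_empty]
    cases j with
    | zero => simp
    | succ j => simp [PowerSeries.coeff_one]
  | succ n ih =>
    intro j
    have hstep : qPoch Xx Qc (n + 1) = qPoch Xx Qc n * (1 - Xx * Qc ^ n) := by
      unfold qPoch
      rw [Finset.prod_range_succ]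
    have hX : Xx * Qc ^ n = PowerSeries.C (R := R) (qq ^ n) * PowerSeries.X := by
      unfold Xx Qc qq
      rw [← map_pow, mul_comm]
    rw [hstep, mul_sub, mul_one, hX, map_sub, ih]
    cases j with
    | zero =>
      have : (PowerSeries.coeff (R := R) 0) (qPoch Xx Qc n * (PowerSeries.C (R := R) (qq ^ n) * PowerSeries.X))
          = 0 := by
        rw [← mul_assoc, PowerSeries.coeff_zero_eq_constantCoeff, map_mul]
        simp
      rw [this, sub_zero, A_succ_zero]
    | succ j =>
      rw [A_succ_succ]
      congr 1
      rw [← mul_assoc, PowerSeries.coeff_succ_mul_X, PowerSeries.coeff_mul_C, ih, mul_comm]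

/-- HasSum criterion in the coefficientwise topology. -/
lemma hasSum_of_coeff {f : ℕ → Rqx} {L : Rqx}
    (h : ∀ m : ℕ, ∃ N : ℕ, ∀ s : Finset ℕ, Finset.range N ⊆ s →
      (PowerSeries.coeff (R := R) m) (∑ n ∈ s, f n) = (PowerSeries.coeff (R := R) m) L) :
    HasSum f L := by
  rw [HasSum]
  have hnhds : (nhds L : Filter Rqx)
      = Filter.comap (fun g (n : ℕ) => (PowerSeries.coeff (R := R) n) g)
          (nhds (fun n => (PowerSeries.coeff (R := R) n) L)) := nhds_induced _ _
  rw [hnhds, Filter.tendsto_comap_iff]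
  rw [show ((fun g (n : ℕ) => (PowerSeries.coeff (R := R) n) g) ∘
      (fun s : Finset ℕ => ∑ n ∈ s, f n))
      = fun (s : Finset ℕ) (m : ℕ) => (PowerSeries.coeff (R := R) m) (∑ n ∈ s, f n) from rfl]
  rw [tendsto_pi_nhds]
  intro m
  obtain ⟨N, hN⟩ := h m
  apply Filter.Tendsto.congr' _ (tendsto_const_nhds (x := (PowerSeries.coeff (R := R) m) L))
  filter_upwards [Filter.eventually_ge_atTop (Finset.range N)] with s hs
  exact (hN s hs).symm

lemma chi12_even (n : ℕ) (hn : n % 2 = 0) : chi12 n = 0 := by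
  unfold chi12
  split_ifs with h1 h2
  · omega
  · omega
  · rfl

/-- coefficient of a term of the left-hand side. -/
lemma coeff_lhs_term (m n : ℕ) :
    (PowerSeries.coeff (R := R) m) ((chi12 n : Rqx) * Qc ^ ((n ^ 2 - 1) / 24) * Xx ^ ((n - 1) / 2))
      = if (n - 1) / 2 = m then ((chi12 n : ℤ) : R) * qq ^ ((n ^ 2 - 1) / 24) else 0 := by
  have h1 : (chi12 n : Rqx) * Qc ^ ((n ^ 2 - 1) / 24)
      = PowerSeries.C (R := R) (((chi12 n : ℤ) : R) * qq ^ ((n ^ 2 - 1) / 24)) := by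
    unfold Qc qq
    rw [map_mul, map_pow, ← map_intCast (PowerSeries.C (R := R)) (chi12 n)]
  rw [h1]
  unfold Xx
  rw [PowerSeries.coeff_mul_X_pow']
  split_ifs with hle heq heq
  · rw [PowerSeries.coeff_C, if_pos (by omega)]
  · rw [PowerSeries.coeff_C, if_neg (by omega)]
  · omega
  · rfl

/-- The common value of both series. -/
def Lser : Rqx := PowerSeries.mk fun m => c m

lemma hasSum_lhs :
    HasSum (fun n : ℕ => (chi12 n : Rqx) * Qc ^ ((n ^ 2 - 1) / 24) * Xx ^ ((n - 1) / 2)) Lser := by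
  apply hasSum_of_coeff
  intro m
  refine ⟨2 * m + 2, fun s hs => ?_⟩
  rw [map_sum]
  have hmem : 2 * m + 1 ∈ s := hs (Finset.mem_range.mpr (by omega))
  rw [Finset.sum_eq_single_of_mem (2 * m + 1) hmem]
  · rw [coeff_lhs_term, if_pos (by omega)]
    rw [Lser, PowerSeries.coeff_mk]
    unfold c qq
    have he : ((2 * m + 1) ^ 2 - 1) / 24 = m * (m + 1) / 6 := by
      have h1 : (2 * m + 1) ^ 2 = 4 * (m * (m + 1)) + 1 := by ring
      have h2 : (2 * m + 1) ^ 2 - 1 = 4 * (m * (m + 1)) := by omega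
      rw [h2, show (24 : ℕ) = 4 * 6 from rfl, Nat.mul_div_mul_left _ _ (by norm_num)]
    rw [he, ← map_intCast (PowerSeries.C (R := ℚ)) (chi12 (2 * m + 1))]
  · intro n hns hne
    rw [coeff_lhs_term]
    split_ifs with hd
    · have hn2 : n % 2 = 0 := by omega
      rw [chi12_even n hn2]
      simp
    · rfl

lemma hasSum_rhs :
    HasSum (fun n : ℕ => qPoch Xx Qc (n + 1) * Xx ^ n) Lser := by
  apply hasSum_of_coeff
  intro m
  refine ⟨m + 1, fun s hs => ?_⟩
  rw [map_sum]
  have h1 : ∀ n ∈ s, (PowerSeries.coeff (R := R) m) (qPoch Xx Qc (n + 1) * Xx ^ n)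
      = if n ≤ m then A (n + 1) (m - n) else 0 := by
    intro n hn
    rw [show (Xx : Rqx) ^ n = PowerSeries.X ^ n from rfl, PowerSeries.coeff_mul_X_pow']
    split_ifs with hle
    · rw [coeff_qPoch]
    · rfl
  rw [Finset.sum_congr rfl h1]
  have h2 : ∑ n ∈ s, (if n ≤ m then A (n + 1) (m - n) else 0)
      = ∑ n ∈ Finset.range (m + 1), (if n ≤ m then A (n + 1) (m - n) else 0) := by
    refine (Finset.sum_subset (fun n hn => hs ?_) (fun n hn hnotin => ?_)).symm
    · exact Finset.mem_range.mpr (by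
        have := Finset.mem_range.mp hn
        omega)
    · rw [if_neg]
      intro hle
      exact hnotin (Finset.mem_range.mpr (by omega))
  rw [h2, Lser, PowerSeries.coeff_mk, ← (main m).1]
  unfold Csum
  rw [← Finset.sum_range_reflect (fun j => A (m + 1 - j) j) (m + 1)]
  refine Finset.sum_congr rfl fun j hj => ?_
  simp only [Finset.mem_range] at hj
  rw [if_pos (by omega)]
  have e1 : m + 1 - (m + 1 - 1 - j) = j + 1 := by omega
  have e2 : m + 1 - 1 - j = m - j := by omega
  rw [e1, e2]

end ZagierAux

/-- Zagier's strange identity in two variables: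
`∑_{n≥0} χ₁₂(n) q^{(n²-1)/24} x^{(n-1)/2} = ∑_{n≥0} (x;q)_{n+1} xⁿ`,
as formal power series in `q` and `x`. -/
theorem zagier_two_variable :
    ∑' n : ℕ, (chi12 n : Rqx) * Qc ^ ((n ^ 2 - 1) / 24) * Xx ^ ((n - 1) / 2) =
      ∑' n : ℕ, qPoch Xx Qc (n + 1) * Xx ^ n := by
  rw [ZagierAux.hasSum_lhs.tsum_eq, ZagierAux.hasSum_rhs.tsum_eq]
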